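/- arXiv:1311.0490 — 2 statements merged into one kernel-verified Lean document; each statement's English description precedes it below -/
import Mathlib

section
/- For the almost Mathieu operator H_{λ,α,θ} with irrational α, the spectrum of H_{λ,α,θ} as a subset of ℝ is independent of θ. -/
open Real
open scoped ENNReal

noncomputable section AMOaux

local notation "ℓ2" => lp (fun _ : ℤ => ℝ) 2

private lemma amo_two_pos : (0:ℝ) < (2 : ℝ≥0∞).toReal := by norm_num

private lemma amo_memℓp_mul {v : ℤ → ℝ} {C : ℝ} (hv : ∀ n, |v n| ≤ C)
    {u : ∀ _ : ℤ, ℝ} (hu : Memℓp u 2) : Memℓp (fun n => v n * u n) 2 := by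
  have hC : 0 ≤ C := le_trans (abs_nonneg _) (hv 0)
  apply memℓp_gen
  refine Summable.of_nonneg_of_le (fun n => Real.rpow_nonneg (norm_nonneg _) _)
    (fun n => ?_) ((hu.summable amo_two_pos).mul_left (C ^ (2 : ℝ≥0∞).toReal))
  calc ‖v n * u n‖ ^ (2 : ℝ≥0∞).toReal
      ≤ (C * ‖u n‖) ^ (2 : ℝ≥0∞).toReal := by
        apply Real.rpow_le_rpow (norm_nonneg _) ?_ amo_two_pos.le
        rw [norm_mul]
        exact mul_le_mul_of_nonneg_right ((Real.norm_eq_abs _) ▸ hv n) (norm_nonneg _)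
    _ = C ^ (2 : ℝ≥0∞).toReal * ‖u n‖ ^ (2 : ℝ≥0∞).toReal :=
        Real.mul_rpow hC (norm_nonneg _)

/-- multiplication operator by a bounded sequence -/
def amoMul (v : ℤ → ℝ) (C : ℝ) (hv : ∀ n, |v n| ≤ C) : ℓ2 →L[ℝ] ℓ2 :=
  LinearMap.mkContinuous
    { toFun := fun u => (⟨fun n => v n * (u : ∀ _ : ℤ, ℝ) n,
        amo_memℓp_mul hv (lp.memℓp u)⟩ : ℓ2)
      map_add' := fun u w => lp.ext (funext fun n => by
        simp [lp.coeFn_add, mul_add]; rfl)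
      map_smul' := fun c u => lp.ext (funext fun n => by
        simp [lp.coeFn_smul, smul_eq_mul]; ring) } C
    (fun u => by
      have hC : 0 ≤ C := le_trans (abs_nonneg _) (hv 0)
      refine lp.norm_le_of_forall_sum_le amo_two_pos
        (mul_nonneg hC (norm_nonneg u)) (fun s => ?_)
      calc ∑ n ∈ s, ‖v n * (u : ∀ _ : ℤ, ℝ) n‖ ^ (2 : ℝ≥0∞).toReal
          ≤ ∑ n ∈ s, C ^ (2 : ℝ≥0∞).toReal * ‖(u : ∀ _ : ℤ, ℝ) n‖ ^ (2 : ℝ≥0∞).toReal := by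
            refine Finset.sum_le_sum (fun n _ => ?_)
            rw [← Real.mul_rpow hC (norm_nonneg _)]
            apply Real.rpow_le_rpow (norm_nonneg _) ?_ amo_two_pos.le
            rw [norm_mul]
            exact mul_le_mul_of_nonneg_right ((Real.norm_eq_abs _) ▸ hv n) (norm_nonneg _)
        _ = C ^ (2 : ℝ≥0∞).toReal * ∑ n ∈ s, ‖(u : ∀ _ : ℤ, ℝ) n‖ ^ (2 : ℝ≥0∞).toReal := by
            rw [Finset.mul_sum]
        _ ≤ C ^ (2 : ℝ≥0∞).toReal * ‖u‖ ^ (2 : ℝ≥0∞).toReal := by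
            refine mul_le_mul_of_nonneg_left ?_ (Real.rpow_nonneg hC _)
            exact lp.sum_rpow_le_norm_rpow amo_two_pos u s
        _ = (C * ‖u‖) ^ (2 : ℝ≥0∞).toReal := (Real.mul_rpow hC (norm_nonneg _)).symm)

@[simp] lemma amoMul_apply (v : ℤ → ℝ) (C : ℝ) (hv : ∀ n, |v n| ≤ C) (u : ℓ2) (n : ℤ) :
    (amoMul v C hv u : ∀ _ : ℤ, ℝ) n = v n * (u : ∀ _ : ℤ, ℝ) n := rfl

lemma amoMul_norm_le (v : ℤ → ℝ) (C : ℝ) (hv : ∀ n, |v n| ≤ C) :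
    ‖amoMul v C hv‖ ≤ C :=
  LinearMap.mkContinuous_norm_le _ (le_trans (abs_nonneg _) (hv 0)) _

private lemma amo_memℓp_shift (k : ℤ) {u : ∀ _ : ℤ, ℝ} (hu : Memℓp u 2) :
    Memℓp (fun n => u (n + k)) 2 := by
  apply memℓp_gen
  have h := hu.summable amo_two_pos
  have he : (fun n : ℤ => ‖u (n + k)‖ ^ (2 : ℝ≥0∞).toReal)
      = (fun n : ℤ => ‖u n‖ ^ (2 : ℝ≥0∞).toReal) ∘ (Equiv.addRight k) := rfl
  rw [he, (Equiv.addRight k).summable_iff]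
  exact h

/-- shift operator -/
def amoShift (k : ℤ) : ℓ2 →L[ℝ] ℓ2 :=
  LinearMap.mkContinuous
    { toFun := fun u => (⟨fun n => (u : ∀ _ : ℤ, ℝ) (n + k),
        amo_memℓp_shift k (lp.memℓp u)⟩ : ℓ2)
      map_add' := fun u w => lp.ext (funext fun n => by simp [lp.coeFn_add]; rfl)
      map_smul' := fun c u => lp.ext (funext fun n => by simp [lp.coeFn_smul]) } 1
    (fun u => by
      rw [one_mul]
      refine lp.norm_le_of_forall_sum_le amo_two_pos (norm_nonneg u) (fun s => ?_)
      show ∑ n ∈ s, ‖(u : ∀ _ : ℤ, ℝ) (n + k)‖ ^ (2 : ℝ≥0∞).toReal ≤ ‖u‖ ^ (2 : ℝ≥0∞).toReal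
      have h1 : ∑ n ∈ s, ‖(u : ∀ _ : ℤ, ℝ) (n + k)‖ ^ (2 : ℝ≥0∞).toReal
          = ∑ n ∈ s.map (Equiv.addRight k).toEmbedding,
              ‖(u : ∀ _ : ℤ, ℝ) n‖ ^ (2 : ℝ≥0∞).toReal := by
        rw [Finset.sum_map]
        rfl
      rw [h1]
      exact lp.sum_rpow_le_norm_rpow amo_two_pos u _)

@[simp] lemma amoShift_apply (k : ℤ) (u : ℓ2) (n : ℤ) :
    (amoShift k u : ∀ _ : ℤ, ℝ) n = (u : ∀ _ : ℤ, ℝ) (n + k) := rfl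

lemma amo_clm_ext {A B : ℓ2 →L[ℝ] ℓ2}
    (h : ∀ (u : ℓ2) (n : ℤ), (A u : ∀ _ : ℤ, ℝ) n = (B u : ∀ _ : ℤ, ℝ) n) : A = B :=
  ContinuousLinearMap.ext fun u => lp.ext (funext fun n => h u n)

/-- shift as a unit -/
def amoShiftUnit (k : ℤ) : (ℓ2 →L[ℝ] ℓ2)ˣ where
  val := amoShift k
  inv := amoShift (-k)
  val_inv := by
    refine amo_clm_ext fun u n => ?_
    rw [ContinuousLinearMap.mul_apply, amoShift_apply, amoShift_apply,
      ContinuousLinearMap.one_apply, add_neg_cancel_right]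
  inv_val := by
    refine amo_clm_ext fun u n => ?_
    rw [ContinuousLinearMap.mul_apply, amoShift_apply, amoShift_apply,
      ContinuousLinearMap.one_apply, neg_add_cancel_right]

def amoPot (lam α θ : ℝ) : ℤ → ℝ := fun n => 2 * lam * Real.cos (2 * π * (θ + (n : ℝ) * α))

lemma amoPot_bdd (lam α θ : ℝ) : ∀ n : ℤ, |amoPot lam α θ n| ≤ 2 * |lam| := by
  intro n
  rw [amoPot, abs_mul, abs_mul, abs_two]
  calc 2 * |lam| * |Real.cos (2 * π * (θ + (n:ℝ) * α))| ≤ 2 * |lam| * 1 := by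
        exact mul_le_mul_of_nonneg_left (Real.abs_cos_le_one _) (by positivity)
    _ = 2 * |lam| := mul_one _

/-- the almost Mathieu operator -/
def amo (lam α θ : ℝ) : ℓ2 →L[ℝ] ℓ2 :=
  amoShift 1 + amoShift (-1) + amoMul (amoPot lam α θ) (2 * |lam|) (amoPot_bdd lam α θ)

lemma amo_apply (lam α θ : ℝ) (u : ℓ2) (n : ℤ) :
    (amo lam α θ u : ∀ _ : ℤ, ℝ) n
      = (u : ∀ _ : ℤ, ℝ) (n + 1) + (u : ∀ _ : ℤ, ℝ) (n - 1)
        + 2 * lam * Real.cos (2 * π * (θ + (n : ℝ) * α)) * (u : ∀ _ : ℤ, ℝ) n := by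
  have : n + (-1 : ℤ) = n - 1 := by ring
  simp only [amo, ContinuousLinearMap.add_apply, lp.coeFn_add, Pi.add_apply,
    amoShift_apply, amoMul_apply, amoPot, this]


/-- conjugation by the shift changes the phase by `k * α` -/
lemma amo_conj (lam α θ : ℝ) (k : ℤ) :
    (↑(amoShiftUnit k) : ℓ2 →L[ℝ] ℓ2) * amo lam α θ * (↑(amoShiftUnit k)⁻¹ : ℓ2 →L[ℝ] ℓ2)
      = amo lam α (θ + (k : ℝ) * α) := by
  refine amo_clm_ext fun u n => ?_
  have hval : (↑(amoShiftUnit k) : ℓ2 →L[ℝ] ℓ2) = amoShift k := rfl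
  have hinv : (↑(amoShiftUnit k)⁻¹ : ℓ2 →L[ℝ] ℓ2) = amoShift (-k) := rfl
  rw [hval, hinv, ContinuousLinearMap.mul_apply, ContinuousLinearMap.mul_apply,
    amoShift_apply, amo_apply, amo_apply, amoShift_apply, amoShift_apply, amoShift_apply]
  have e1 : n + k + 1 + -k = n + 1 := by ring
  have e2 : n + k - 1 + -k = n - 1 := by ring
  have e3 : n + k + -k = n := by ring
  rw [e1, e2, e3]
  have e4 : 2 * π * (θ + ((n + k : ℤ) : ℝ) * α) = 2 * π * (θ + (k : ℝ) * α + (n : ℝ) * α) := by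
    push_cast
    ring
  rw [e4]

/-- the phase is `1`-periodic -/
lemma amo_period (lam α θ : ℝ) (m : ℤ) : amo lam α (θ + (m : ℝ)) = amo lam α θ := by
  refine amo_clm_ext fun u n => ?_
  rw [amo_apply, amo_apply]
  have e : 2 * π * (θ + (m : ℝ) + (n : ℝ) * α) = 2 * π * (θ + (n : ℝ) * α) + (m : ℝ) * (2 * π) := by
    ring
  rw [e, Real.cos_add_int_mul_two_pi]

private lemma amo_cos_lip (a b : ℝ) : |Real.cos a - Real.cos b| ≤ |a - b| := by
  rw [Real.cos_sub_cos, abs_mul, abs_mul]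
  have h1 : |Real.sin ((a + b) / 2)| ≤ 1 := Real.abs_sin_le_one _
  have h2 : |Real.sin ((a - b) / 2)| ≤ |(a - b) / 2| := Real.abs_sin_le_abs
  have h3 : |(-2 : ℝ)| = 2 := by norm_num
  rw [h3, abs_div, abs_two] at *
  nlinarith [abs_nonneg (Real.sin ((a - b) / 2)), abs_nonneg (a - b),
    abs_nonneg (Real.sin ((a + b) / 2))]

lemma amo_dist (lam α θ θ' : ℝ) :
    ‖amo lam α θ - amo lam α θ'‖ ≤ 4 * π * |lam| * |θ - θ'| := by
  have hbd : ∀ n : ℤ, |amoPot lam α θ n - amoPot lam α θ' n| ≤ 4 * π * |lam| * |θ - θ'| := by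
    intro n
    have : amoPot lam α θ n - amoPot lam α θ' n
        = 2 * lam * (Real.cos (2 * π * (θ + (n : ℝ) * α)) - Real.cos (2 * π * (θ' + (n : ℝ) * α))) := by
      rw [amoPot, amoPot]; ring
    rw [this, abs_mul, abs_mul, abs_two]
    have hc := amo_cos_lip (2 * π * (θ + (n : ℝ) * α)) (2 * π * (θ' + (n : ℝ) * α))
    have he : 2 * π * (θ + (n : ℝ) * α) - 2 * π * (θ' + (n : ℝ) * α) = 2 * π * (θ - θ') := by ring
    rw [he, abs_mul, abs_mul, abs_two, abs_of_nonneg Real.pi_nonneg] at hc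
    calc 2 * |lam| * |Real.cos (2 * π * (θ + (n : ℝ) * α)) - Real.cos (2 * π * (θ' + (n : ℝ) * α))|
        ≤ 2 * |lam| * (2 * π * |θ - θ'|) := by
          exact mul_le_mul_of_nonneg_left hc (by positivity)
      _ = 4 * π * |lam| * |θ - θ'| := by ring
  have heq : amo lam α θ - amo lam α θ'
      = amoMul (fun n => amoPot lam α θ n - amoPot lam α θ' n) (4 * π * |lam| * |θ - θ'|) hbd := by
    refine amo_clm_ext fun u n => ?_
    have : ((amo lam α θ - amo lam α θ') u : ∀ _ : ℤ, ℝ) n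
        = (amo lam α θ u : ∀ _ : ℤ, ℝ) n - (amo lam α θ' u : ∀ _ : ℤ, ℝ) n := by
      rw [ContinuousLinearMap.sub_apply, lp.coeFn_sub, Pi.sub_apply]
    rw [this, amo_apply, amo_apply, amoMul_apply, amoPot, amoPot]
    ring
  rw [heq]
  exact amoMul_norm_le _ _ _

/-- density of `ℤ α + ℤ` for irrational `α` -/
lemma amo_dense {α : ℝ} (hα : Irrational α) (x ε : ℝ) (hε : 0 < ε) :
    ∃ k m : ℤ, |x - ((k : ℝ) * α + (m : ℝ))| < ε := by
  set S : AddSubgroup ℝ := AddSubgroup.closure {1, α} with hS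
  have hd : Dense (S : Set ℝ) := by
    rcases S.dense_or_cyclic with h | ⟨a, ha⟩
    · exact h
    · exfalso
      have h1 : (1 : ℝ) ∈ S := AddSubgroup.subset_closure (by simp)
      have hA : α ∈ S := AddSubgroup.subset_closure (by simp)
      rw [ha, AddSubgroup.mem_closure_singleton] at h1 hA
      obtain ⟨n, hn⟩ := h1
      obtain ⟨m, hm⟩ := hA
      rw [zsmul_eq_mul] at hn hm
      have hn0 : (n : ℝ) ≠ 0 := by
        intro h
        rw [h, zero_mul] at hn
        exact zero_ne_one hn
      refine hα ⟨(m : ℚ) / (n : ℚ), ?_⟩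
      push_cast
      rw [div_eq_iff hn0]
      linear_combination (n : ℝ) * hm - (m : ℝ) * hn
  have hmem : ∀ y ∈ S, ∃ k m : ℤ, y = (k : ℝ) * α + (m : ℝ) := by
    intro y hy
    induction hy using AddSubgroup.closure_induction with
    | mem z hz =>
        rcases hz with rfl | rfl
        · exact ⟨0, 1, by norm_num⟩
        · exact ⟨1, 0, by norm_num⟩
    | zero => exact ⟨0, 0, by norm_num⟩
    | add y z _ _ hy hz =>
        obtain ⟨k1, m1, rfl⟩ := hy
        obtain ⟨k2, m2, rfl⟩ := hz
        exact ⟨k1 + k2, m1 + m2, by push_cast; ring⟩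
    | neg y _ hy =>
        obtain ⟨k1, m1, rfl⟩ := hy
        exact ⟨-k1, -m1, by push_cast; ring⟩
  have hx : x ∈ closure (S : Set ℝ) := hd x
  rw [Metric.mem_closure_iff] at hx
  obtain ⟨y, hyS, hxy⟩ := hx ε hε
  obtain ⟨k, m, rfl⟩ := hmem y hyS
  exact ⟨k, m, by rwa [Real.dist_eq] at hxy⟩

lemma amo_spectrum_subset (lam α : ℝ) (hα : Irrational α) (θ₁ θ₂ : ℝ) :
    spectrum ℝ (amo lam α θ₁) ⊆ spectrum ℝ (amo lam α θ₂) := by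
  intro z hz
  by_contra hz2
  rw [spectrum.notMem_iff] at hz2
  obtain ⟨ε, hε, hball⟩ := Metric.isOpen_iff.mp Units.isOpen _ hz2
  set A : ℝ := 4 * π * |lam| with hA
  have hA0 : 0 ≤ A := by positivity
  set δ : ℝ := ε / (A + 1) with hδdef
  have hδ : 0 < δ := div_pos hε (by positivity)
  obtain ⟨k, m, hkm⟩ := amo_dense hα (θ₂ - θ₁) δ hδ
  set θ' : ℝ := θ₁ + (k : ℝ) * α + (m : ℝ) with hθ'
  have hdist : |θ' - θ₂| < δ := by
    have : θ' - θ₂ = -(θ₂ - θ₁ - ((k : ℝ) * α + (m : ℝ))) := by rw [hθ']; ring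
    rw [this, abs_neg]
    exact hkm
  have hAδ : A * δ < ε := by
    have h1 : δ * (A + 1) = ε := div_mul_cancel₀ _ (by positivity)
    nlinarith
  have key : IsUnit (algebraMap ℝ (ℓ2 →L[ℝ] ℓ2) z - amo lam α θ') := by
    apply hball
    rw [Metric.mem_ball, dist_eq_norm]
    have e : (algebraMap ℝ (ℓ2 →L[ℝ] ℓ2) z - amo lam α θ')
        - (algebraMap ℝ (ℓ2 →L[ℝ] ℓ2) z - amo lam α θ₂)
        = -(amo lam α θ' - amo lam α θ₂) := by abel
    rw [e, norm_neg]
    calc ‖amo lam α θ' - amo lam α θ₂‖ ≤ A * |θ' - θ₂| := amo_dist lam α θ' θ₂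
      _ ≤ A * δ := mul_le_mul_of_nonneg_left hdist.le hA0
      _ < ε := hAδ
  have hper : amo lam α θ' = amo lam α (θ₁ + (k : ℝ) * α) := amo_period lam α _ m
  have hconj : spectrum ℝ (amo lam α (θ₁ + (k : ℝ) * α)) = spectrum ℝ (amo lam α θ₁) := by
    rw [← amo_conj lam α θ₁ k]
    exact spectrum.units_conjugate
  have hnot : z ∉ spectrum ℝ (amo lam α θ₁) := by
    rw [← hconj, spectrum.notMem_iff, ← hper]
    exact key
  exact hnot hz

end AMOaux

/-- For the almost Mathieu operator `H_{λ,α,θ}` on `ℓ²(ℤ)` with irrational `α`,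
the spectrum is independent of the phase `θ`. -/
theorem stmt_6 (lam α θ₁ θ₂ : ℝ) (hα : Irrational α)
    (H₁ H₂ : lp (fun _ : ℤ => ℝ) 2 →L[ℝ] lp (fun _ : ℤ => ℝ) 2)
    (h₁ : ∀ (u : lp (fun _ : ℤ => ℝ) 2) (n : ℤ),
      (H₁ u : ∀ _ : ℤ, ℝ) n = (u : ∀ _ : ℤ, ℝ) (n + 1) + (u : ∀ _ : ℤ, ℝ) (n - 1) +
        2 * lam * Real.cos (2 * π * (θ₁ + (n : ℝ) * α)) * (u : ∀ _ : ℤ, ℝ) n)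
    (h₂ : ∀ (u : lp (fun _ : ℤ => ℝ) 2) (n : ℤ),
      (H₂ u : ∀ _ : ℤ, ℝ) n = (u : ∀ _ : ℤ, ℝ) (n + 1) + (u : ∀ _ : ℤ, ℝ) (n - 1) +
        2 * lam * Real.cos (2 * π * (θ₂ + (n : ℝ) * α)) * (u : ∀ _ : ℤ, ℝ) n) :
    spectrum ℝ H₁ = spectrum ℝ H₂ := by
  have hH₁ : H₁ = amo lam α θ₁ := amo_clm_ext fun u n => by rw [h₁ u n, amo_apply]
  have hH₂ : H₂ = amo lam α θ₂ := amo_clm_ext fun u n => by rw [h₂ u n, amo_apply]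
  rw [hH₁, hH₂]
  exact Set.Subset.antisymm (amo_spectrum_subset lam α hα θ₁ θ₂)
    (amo_spectrum_subset lam α hα θ₂ θ₁)
end

section
/- Let H be a self-adjoint operator on ℓ²(ℤ) and φ a polynomially bounded solution of Hφ = Eφ with φ(0) = 1 and |φ(k)| ≤ (1+|k|)^C. Suppose there exist c > 0 and, for every sufficiently large k, an interval I(k) = [x₁, x₂] ∋ k with dist(k, {x₁, x₂}) ≥ |I(k)|/5 and Green's function bounds |G_{I(k)}(k, x_i)| ≤ e^{−c|k−x_i|}, with interval lengths |I(k)| → ∞ at least linearly in dist to resonances. Then via the identity φ(x) = −G_I(x₁,x)φ(x₁−1) − G_I(x,x₂)φ(x₂+1) iterated along a chain of such intervals, φ decays exponentially: for every ε > 0, |φ(k)| ≤ e^{−(c−ε)|k|} for |k| large. -/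
open Real Matrix

/-- The matrix of the restriction `R_I (H - E) R_I` of the Schrödinger operator
`(H u)_n = u_{n+1} + u_{n-1} + v_n u_n` to the interval `I = [x₁, x₁ + k - 1]`. -/
noncomputable def schrMat (v : ℤ → ℝ) (E : ℝ) (x₁ : ℤ) (k : ℕ) :
    Matrix (Fin k) (Fin k) ℝ := fun i j =>
  (if i = j then v (x₁ + (i : ℤ)) - E else 0) +
    (if (i : ℕ) + 1 = (j : ℕ) ∨ (j : ℕ) + 1 = (i : ℕ) then 1 else 0)

set_option maxHeartbeats 1000000 in
private lemma poly_bound (C δ : ℝ) (hδ : 0 < δ) :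
    ∃ A : ℝ, 0 < A ∧ ∀ x : ℝ, 0 ≤ x → (1+x)^C ≤ A * Real.exp (δ * x) := by
  set C' : ℝ := max C 1 with hC'
  have hC'pos : 0 < C' := lt_of_lt_of_le one_pos (le_max_right _ _)
  set a : ℝ := min 1 (δ/C') with ha
  have hapos : 0 < a := lt_min one_pos (div_pos hδ hC'pos)
  have ha1 : a ≤ 1 := min_le_left _ _
  refine ⟨(a⁻¹)^C', Real.rpow_pos_of_pos (inv_pos.mpr hapos) _, fun x hx => ?_⟩
  have h1 : (1+x)^C ≤ (1+x)^C' :=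
    Real.rpow_le_rpow_of_exponent_le (by linarith) (le_max_left _ _)
  have h2 : 1 + x ≤ a⁻¹ * Real.exp (a*x) := by
    have := Real.add_one_le_exp (a*x)
    have hinv : 1 ≤ a⁻¹ := one_le_inv_iff₀.mpr ⟨hapos, ha1⟩
    have : a⁻¹ * (a*x+1) ≤ a⁻¹ * Real.exp (a*x) :=
      mul_le_mul_of_nonneg_left this (by positivity)
    have hax : a⁻¹ * (a*x+1) = x + a⁻¹ := by field_simp
    nlinarith
  have h3 : (1+x)^C' ≤ (a⁻¹ * Real.exp (a*x))^C' :=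
    Real.rpow_le_rpow (by linarith) h2 (le_of_lt hC'pos)
  have h4 : (a⁻¹ * Real.exp (a*x))^C' = (a⁻¹)^C' * Real.exp (a*x*C') := by
    rw [Real.mul_rpow (by positivity) (le_of_lt (Real.exp_pos _)),
      ← Real.exp_mul]
  have h5 : Real.exp (a*x*C') ≤ Real.exp (δ*x) := by
    apply Real.exp_le_exp.mpr
    have haC : a * C' ≤ δ := by
      have : a ≤ δ/C' := min_le_right _ _
      calc a * C' ≤ (δ/C') * C' := mul_le_mul_of_nonneg_right this (le_of_lt hC'pos)
      _ = δ := by field_simp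
    nlinarith
  calc (1+x)^C ≤ (1+x)^C' := h1
  _ ≤ (a⁻¹)^C' * Real.exp (a*x*C') := by rw [← h4]; exact h3
  _ ≤ (a⁻¹)^C' * Real.exp (δ*x) :=
      mul_le_mul_of_nonneg_left h5 (le_of_lt (Real.rpow_pos_of_pos (by positivity) _))

set_option maxHeartbeats 1000000 in
private lemma sum_ite_coe (m t : ℕ) (f : Fin (m+1) → ℝ) :
    ∑ i : Fin (m+1), (if (i:ℕ) = t then f i else 0)
      = if h : t < m+1 then f ⟨t, h⟩ else 0 := by
  split_ifs with h
  · rw [Finset.sum_eq_single (⟨t, h⟩ : Fin (m+1))]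
    · simp
    · intro i _ hne
      rw [if_neg]
      exact fun hc => hne (Fin.ext hc)
    · intro hmem; exact absurd (Finset.mem_univ _) hmem
  · apply Finset.sum_eq_zero
    intro i _
    rw [if_neg]
    exact fun hc => h (hc ▸ i.isLt)

set_option maxHeartbeats 1000000 in
private lemma schr_identity (v : ℤ → ℝ) (E : ℝ) (φ : ℤ → ℝ)
    (hφ : ∀ n : ℤ, φ (n + 1) + φ (n - 1) + v n * φ n = E * φ n)
    (x₁ : ℤ) (m : ℕ) (hU : IsUnit (schrMat v E x₁ (m+1)).det) (i : Fin (m+1)) :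
    φ (x₁ + (i:ℤ)) = -((schrMat v E x₁ (m+1))⁻¹ i 0) * φ (x₁ - 1)
      - (schrMat v E x₁ (m+1))⁻¹ i (Fin.last m) * φ (x₁ + (m:ℤ) + 1) := by
  set A := schrMat v E x₁ (m+1) with hA
  set u : Fin (m+1) → ℝ := fun j => φ (x₁ + (j:ℤ)) with hu
  set b : Fin (m+1) → ℝ := fun j =>
    (if j = 0 then -φ (x₁ - 1) else 0)
      + (if j = Fin.last m then -φ (x₁ + (m:ℤ) + 1) else 0) with hb
  have hAu : A.mulVec u = b := by
    funext j
    have hrow : ∀ i' : Fin (m+1), A j i' = (if j = i' then v (x₁ + (j:ℤ)) - E else 0)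
        + (if (j:ℕ) + 1 = (i':ℕ) ∨ (i':ℕ) + 1 = (j:ℕ) then 1 else 0) := fun _ => rfl
    have hmv : A.mulVec u j = ∑ i', A j i' * u i' := rfl
    have hsplit : ∀ i' : Fin (m+1), A j i' * u i'
        = (if j = i' then (v (x₁ + (j:ℤ)) - E) * u i' else 0)
          + ((if (i':ℕ) = (j:ℕ)+1 then u i' else 0)
            + (if (j:ℕ) ≠ 0 ∧ (i':ℕ) = (j:ℕ)-1 then u i' else 0)) := by
      intro i'
      simp only [hrow, add_mul, ite_mul, zero_mul, one_mul]
      congr 1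
      by_cases h1 : (i':ℕ) = (j:ℕ)+1
      · rw [if_pos (Or.inl h1.symm), if_pos h1, if_neg (by omega), add_zero]
      · by_cases h2 : (j:ℕ) ≠ 0 ∧ (i':ℕ) = (j:ℕ)-1
        · rw [if_pos (by omega), if_neg h1, if_pos h2, zero_add]
        · rw [if_neg (by omega), if_neg h1, if_neg h2, add_zero]
    rw [hmv]
    simp only [hsplit]
    rw [Finset.sum_add_distrib, Finset.sum_add_distrib, Finset.sum_ite_eq]
    have e1 : ∑ i' : Fin (m+1), (if (i':ℕ) = (j:ℕ)+1 then u i' else 0)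
        = if h : (j:ℕ)+1 < m+1 then u ⟨(j:ℕ)+1, h⟩ else 0 := sum_ite_coe m _ u
    have e2 : ∑ i' : Fin (m+1), (if (j:ℕ) ≠ 0 ∧ (i':ℕ) = (j:ℕ)-1 then u i' else 0)
        = if (j:ℕ) = 0 then 0 else u ⟨(j:ℕ)-1, by omega⟩ := by
      by_cases hj0 : (j:ℕ) = 0
      · simp [hj0]
      · rw [if_neg hj0]
        have : ∀ i' : Fin (m+1), (if (j:ℕ) ≠ 0 ∧ (i':ℕ) = (j:ℕ)-1 then u i' else 0)
            = (if (i':ℕ) = (j:ℕ)-1 then u i' else 0) := by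
          intro i'; by_cases h : (i':ℕ) = (j:ℕ)-1 <;> simp [h, hj0]
        simp only [this]
        rw [sum_ite_coe m _ u, dif_pos (by omega : (j:ℕ)-1 < m+1)]
    rw [e1, e2]
    simp only [Finset.mem_univ, if_true]
    -- now case analysis
    have hφj := hφ (x₁ + (j:ℤ))
    by_cases hj0 : (j:ℕ) = 0 <;> by_cases hjm : (j:ℕ) = m
    · -- j = 0, m = 0
      rw [dif_neg (by omega), if_pos hj0]
      have hb0 : b j = -φ (x₁ - 1) + -φ (x₁ + (m:ℤ) + 1) := by
        rw [hb]
        simp only []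
        rw [if_pos (Fin.ext hj0 : j = 0), if_pos (Fin.ext (by omega : (j:ℕ) = m) : j = Fin.last m)]
      rw [hb0, hu]
      simp only []
      have a1 : x₁ + ((j:ℕ):ℤ) = x₁ + (j:ℤ) := rfl
      have a2 : x₁ + (m:ℤ) + 1 = (x₁ + (j:ℤ)) + 1 := by omega
      have a3 : x₁ - 1 = (x₁ + (j:ℤ)) - 1 := by omega
      rw [a2, a3]
      linarith [hφj]
    · -- j = 0, m ≥ 1
      rw [dif_pos (by omega), if_pos hj0]
      have hb0 : b j = -φ (x₁ - 1) := by
        rw [hb]; simp only []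
        rw [if_pos (Fin.ext hj0 : j = 0),
          if_neg (fun h => hjm (by simpa using congrArg Fin.val h)), add_zero]
      rw [hb0, hu]
      simp only []
      have a1 : x₁ + (((j:ℕ)+1 : ℕ):ℤ) = (x₁ + (j:ℤ)) + 1 := by push_cast; ring
      have a3 : x₁ - 1 = (x₁ + (j:ℤ)) - 1 := by omega
      rw [a1, a3]
      linarith [hφj]
    · -- j = m ≥ 1
      rw [dif_neg (by omega), if_neg hj0]
      have hb0 : b j = -φ (x₁ + (m:ℤ) + 1) := by
        rw [hb]; simp only []
        rw [if_neg (fun h => hj0 (by simpa using congrArg Fin.val h)),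
          if_pos (Fin.ext (by simpa using hjm) : j = Fin.last m), zero_add]
      rw [hb0, hu]
      simp only []
      have a1 : x₁ + (((j:ℕ)-1 : ℕ):ℤ) = (x₁ + (j:ℤ)) - 1 := by omega
      have a2 : x₁ + (m:ℤ) + 1 = (x₁ + (j:ℤ)) + 1 := by omega
      rw [a1, a2]
      linarith [hφj]
    · -- interior
      rw [dif_pos (by omega), if_neg hj0]
      have hb0 : b j = 0 := by
        rw [hb]; simp only []
        rw [if_neg (fun h => hj0 (by simpa using congrArg Fin.val h)),
          if_neg (fun h => hjm (by simpa using congrArg Fin.val h)), add_zero]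
      rw [hb0, hu]
      simp only []
      have a1 : x₁ + (((j:ℕ)+1 : ℕ):ℤ) = (x₁ + (j:ℤ)) + 1 := by push_cast; ring
      have a2 : x₁ + (((j:ℕ)-1 : ℕ):ℤ) = (x₁ + (j:ℤ)) - 1 := by omega
      rw [a1, a2]
      linarith [hφj]
  have hui : u = (A⁻¹).mulVec b := by
    have h1 : A⁻¹ * A = 1 := Matrix.nonsing_inv_mul A hU
    calc u = (1 : Matrix (Fin (m+1)) (Fin (m+1)) ℝ).mulVec u := (Matrix.one_mulVec u).symm
    _ = (A⁻¹ * A).mulVec u := by rw [h1]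
    _ = (A⁻¹).mulVec (A.mulVec u) := by rw [Matrix.mulVec_mulVec]
    _ = (A⁻¹).mulVec b := by rw [hAu]
  have : u i = (A⁻¹).mulVec b i := by rw [← hui]
  rw [hu] at this
  simp only [] at this
  rw [this]
  show (∑ j, A⁻¹ i j * b j) = _
  simp only [hb, mul_add, mul_ite, mul_zero]
  rw [Finset.sum_add_distrib, Finset.sum_ite_eq', Finset.sum_ite_eq']
  simp only [Finset.mem_univ, if_true]
  ring

set_option maxHeartbeats 1000000 in
/-- Block resolvent expansion: if `φ` is a polynomially bounded generalized
eigenfunction with `φ 0 = 1`, and every point `k` of sufficiently large modulus is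
`(c, |I|)`-regular — i.e. lies well inside an interval `I(k) = [x₁, x₁ + m]`
(with `dist(k, ∂I) ≥ |I|/5` and lengths tending to infinity) on which the Green's
function satisfies `|G_{I(k)}(k, x_i)| ≤ e^{-c |k - x_i|}` — then `φ` decays
exponentially: for every `ε > 0`, `|φ(k)| ≤ e^{-(c-ε)|k|}` for large `|k|`. -/
theorem stmt_17 (v : ℤ → ℝ) (E : ℝ) (φ : ℤ → ℝ) (C : ℝ)
    (hφ : ∀ n : ℤ, φ (n + 1) + φ (n - 1) + v n * φ n = E * φ n)
    (h0 : φ 0 = 1) (hbd : ∀ k : ℤ, |φ k| ≤ (1 + |(k : ℝ)|) ^ C)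
    (c : ℝ) (hc : 0 < c)
    (hreg : ∀ L : ℕ, ∃ K : ℕ, ∀ k : ℤ, (K : ℤ) ≤ |k| →
      ∃ (x₁ : ℤ) (m : ℕ), L ≤ m + 1 ∧ x₁ ≤ k ∧ k ≤ x₁ + m ∧
        ((m : ℝ) + 1) ≤ 5 * ((k : ℝ) - (x₁ : ℝ)) ∧
        ((m : ℝ) + 1) ≤ 5 * (((x₁ : ℝ) + m) - (k : ℝ)) ∧
        IsUnit (schrMat v E x₁ (m + 1)).det ∧
        ∀ i : Fin (m + 1), x₁ + (i : ℤ) = k →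
          |(schrMat v E x₁ (m + 1))⁻¹ i 0| ≤ Real.exp (-c * ((k : ℝ) - (x₁ : ℝ))) ∧
          |(schrMat v E x₁ (m + 1))⁻¹ i (Fin.last m)| ≤
            Real.exp (-c * (((x₁ : ℝ) + m) - (k : ℝ)))) :
    ∀ ε > 0, ∃ K : ℕ, ∀ k : ℤ, (K : ℤ) ≤ |k| →
      |φ k| ≤ Real.exp (-(c - ε) * |(k : ℝ)|) := by
  suffices h : ∀ ε : ℝ, 0 < ε → ε ≤ c/2 → ∃ K : ℕ, ∀ k : ℤ, (K : ℤ) ≤ |k| →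
      |φ k| ≤ Real.exp (-(c - ε) * |(k : ℝ)|) by
    intro ε hε
    obtain ⟨K, hK⟩ := h (min ε (c/2)) (lt_min hε (by positivity)) (min_le_right _ _)
    refine ⟨K, fun k hk => (hK k hk).trans (Real.exp_le_exp.mpr ?_)⟩
    have h1 : min ε (c/2) ≤ ε := min_le_left _ _
    nlinarith [abs_nonneg ((k:ℝ))]
  intro ε hε hεc
  obtain ⟨γ, hγdef⟩ : ∃ γ : ℝ, γ = c - ε := ⟨_, rfl⟩
  obtain ⟨β, hβdef⟩ : ∃ β : ℝ, β = c - ε/2 := ⟨_, rfl⟩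
  have hγ : 0 < γ := by rw [hγdef]; linarith
  have hβ : 0 < β := by rw [hβdef]; linarith
  have hβc : β ≤ c := by rw [hβdef]; linarith
  obtain ⟨A, hA, hAbd⟩ := poly_bound C (ε/2) (by positivity)
  obtain ⟨L, hLdef⟩ : ∃ L : ℕ, L = 5 * (⌈(Real.log 2 + c) / (ε/2)⌉₊ + 1) := ⟨_, rfl⟩
  obtain ⟨K, hK⟩ := hreg L
  have hL5 : (Real.log 2 + c) / (ε/2) ≤ (L:ℝ)/5 := by
    have h1 : (Real.log 2 + c) / (ε/2) ≤ (⌈(Real.log 2 + c) / (ε/2)⌉₊ : ℝ) := Nat.le_ceil _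
    have h2 : ((⌈(Real.log 2 + c) / (ε/2)⌉₊ : ℝ)) ≤ (L:ℝ)/5 := by
      rw [hLdef]; push_cast; linarith
    linarith
  -- the single-step inequality
  have hstep : ∀ p : ℤ, (K:ℤ) ≤ |p| → ∃ p₁ p₂ : ℤ,
      1 ≤ |(p:ℝ) - (p₁:ℝ)| ∧ 1 ≤ |(p:ℝ) - (p₂:ℝ)| ∧
      |φ p| ≤ 2⁻¹ * (Real.exp (-β * |(p:ℝ)-(p₁:ℝ)|) * |φ p₁|)
            + 2⁻¹ * (Real.exp (-β * |(p:ℝ)-(p₂:ℝ)|) * |φ p₂|) := by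
    intro p hp
    obtain ⟨x₁, m, hL, hx1, hx2, hd1, hd2, hU, hG⟩ := hK p hp
    set i : Fin (m+1) := ⟨(p - x₁).toNat, by omega⟩ with hidef
    have hi : x₁ + (i:ℤ) = p := by
      show x₁ + (((p - x₁).toNat : ℕ) : ℤ) = p
      omega
    obtain ⟨hG1, hG2⟩ := hG i hi
    have hid := schr_identity v E φ hφ x₁ m hU i
    rw [hi] at hid
    refine ⟨x₁ - 1, x₁ + m + 1, ?_, ?_, ?_⟩
    · push_cast
      rw [abs_of_nonneg (by push_cast at hd1 ⊢; linarith)]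
      push_cast at hd1; linarith
    · push_cast
      rw [abs_of_nonpos (by push_cast at hd2 ⊢; linarith)]
      push_cast at hd2; linarith
    have hmL : (L:ℝ) ≤ (m:ℝ) + 1 := by exact_mod_cast hL
    have hd1' : (Real.log 2 + c) / (ε/2) ≤ (p:ℝ) - (x₁:ℝ) := by linarith
    have hd2' : (Real.log 2 + c) / (ε/2) ≤ ((x₁:ℝ) + m) - (p:ℝ) := by linarith
    have hkey : ∀ d : ℝ, (Real.log 2 + c) / (ε/2) ≤ d →
        Real.exp (-c * d) ≤ 2⁻¹ * Real.exp (-β * (d+1)) := by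
      intro d hd
      have hld : Real.log 2 + c ≤ (ε/2) * d := by
        rw [div_le_iff₀ (by positivity)] at hd
        linarith
      have h2 : (2:ℝ)⁻¹ = Real.exp (-Real.log 2) := by
        rw [Real.exp_neg, Real.exp_log (by norm_num : (0:ℝ) < 2)]
      rw [h2, ← Real.exp_add]
      apply Real.exp_le_exp.mpr
      have h3 : c * d - β * d = (ε/2) * d := by rw [hβdef]; ring
      have h4 : β * (d+1) = β * d + β := by ring
      linarith
    have he1 : Real.exp (-c * ((p:ℝ) - (x₁:ℝ))) ≤
        2⁻¹ * Real.exp (-β * |(p:ℝ) - ((x₁ - 1 : ℤ):ℝ)|) := by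
      have habs : |(p:ℝ) - ((x₁ - 1 : ℤ):ℝ)| = ((p:ℝ) - (x₁:ℝ)) + 1 := by
        push_cast
        rw [abs_of_nonneg (by push_cast at hd1; linarith)]
        ring
      rw [habs]
      exact hkey _ hd1'
    have he2 : Real.exp (-c * (((x₁:ℝ) + m) - (p:ℝ))) ≤
        2⁻¹ * Real.exp (-β * |(p:ℝ) - ((x₁ + m + 1 : ℤ):ℝ)|) := by
      have habs : |(p:ℝ) - ((x₁ + m + 1 : ℤ):ℝ)| = (((x₁:ℝ) + m) - (p:ℝ)) + 1 := by
        push_cast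
        rw [abs_of_nonpos (by push_cast at hd2; linarith)]
        ring
      rw [habs]
      exact hkey _ hd2'
    calc |φ p| = |-((schrMat v E x₁ (m+1))⁻¹ i 0) * φ (x₁ - 1)
          - (schrMat v E x₁ (m+1))⁻¹ i (Fin.last m) * φ (x₁ + (m:ℤ) + 1)| := by rw [← hid]
    _ ≤ |(schrMat v E x₁ (m+1))⁻¹ i 0| * |φ (x₁ - 1)|
        + |(schrMat v E x₁ (m+1))⁻¹ i (Fin.last m)| * |φ (x₁ + (m:ℤ) + 1)| := by
          calc |-((schrMat v E x₁ (m+1))⁻¹ i 0) * φ (x₁ - 1)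
              - (schrMat v E x₁ (m+1))⁻¹ i (Fin.last m) * φ (x₁ + (m:ℤ) + 1)|
              ≤ |-((schrMat v E x₁ (m+1))⁻¹ i 0) * φ (x₁ - 1)|
                + |(schrMat v E x₁ (m+1))⁻¹ i (Fin.last m) * φ (x₁ + (m:ℤ) + 1)| :=
                abs_sub _ _
          _ = _ := by rw [abs_mul, abs_mul, abs_neg]
    _ ≤ Real.exp (-c * ((p:ℝ) - (x₁:ℝ))) * |φ (x₁ - 1)|
        + Real.exp (-c * (((x₁:ℝ) + m) - (p:ℝ))) * |φ (x₁ + (m:ℤ) + 1)| :=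
          add_le_add (mul_le_mul_of_nonneg_right hG1 (abs_nonneg _))
            (mul_le_mul_of_nonneg_right hG2 (abs_nonneg _))
    _ ≤ (2⁻¹ * Real.exp (-β * |(p:ℝ) - ((x₁ - 1 : ℤ):ℝ)|)) * |φ (x₁ - 1)|
        + (2⁻¹ * Real.exp (-β * |(p:ℝ) - ((x₁ + m + 1 : ℤ):ℝ)|)) * |φ (x₁ + (m:ℤ) + 1)| :=
          add_le_add (mul_le_mul_of_nonneg_right he1 (abs_nonneg _))
            (mul_le_mul_of_nonneg_right he2 (abs_nonneg _))
    _ = 2⁻¹ * (Real.exp (-β * |(p:ℝ) - ((x₁ - 1:ℤ):ℝ)|) * |φ (x₁ - 1)|)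
        + 2⁻¹ * (Real.exp (-β * |(p:ℝ) - ((x₁ + m + 1:ℤ):ℝ)|) * |φ (x₁ + (m:ℤ) + 1)|) := by
          have h6 : (x₁ + (m:ℤ) + 1) = (x₁ + m + 1 : ℤ) := by ring
          rw [h6]
          ring
  obtain ⟨M, hMdef⟩ : ∃ M : ℝ, M = A * Real.exp ((β + ε/2) * K) := ⟨_, rfl⟩
  have hM : 0 < M := by rw [hMdef]; positivity
  -- main induction
  have main : ∀ N : ℕ, ∀ p : ℤ, (K:ℤ) ≤ |p| →
      |φ p| ≤ M * Real.exp (-β * |(p:ℝ)|)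
        + A * Real.exp ((ε/2) * |(p:ℝ)|) * Real.exp (-γ * N) := by
    intro N
    induction N with
    | zero =>
      intro p hp
      have h1 : |φ p| ≤ A * Real.exp ((ε/2) * |(p:ℝ)|) := by
        have h2 := hbd p
        have h3 := hAbd |(p:ℝ)| (abs_nonneg _)
        linarith
      have h3 : (0:ℝ) ≤ M * Real.exp (-β * |(p:ℝ)|) := by positivity
      simp only [Nat.cast_zero, mul_zero, neg_zero, Real.exp_zero, mul_one]
      linarith
    | succ N ih =>
      intro p hp
      obtain ⟨p₁, p₂, hs₁, hs₂, hst⟩ := hstep p hp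
      have hbr : ∀ q : ℤ, 1 ≤ |(p:ℝ) - (q:ℝ)| →
          Real.exp (-β * |(p:ℝ)-(q:ℝ)|) * |φ q|
            ≤ M * Real.exp (-β * |(p:ℝ)|)
              + A * Real.exp ((ε/2) * |(p:ℝ)|) * Real.exp (-γ * (N+1:ℕ)) := by
        intro q hs
        set s : ℝ := |(p:ℝ) - (q:ℝ)| with hsdef
        have htri1 : |(p:ℝ)| ≤ |(q:ℝ)| + s := by
          have := abs_sub_abs_le_abs_sub (p:ℝ) (q:ℝ)
          linarith
        have htri2 : |(q:ℝ)| ≤ |(p:ℝ)| + s := by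
          have h1 := abs_sub_abs_le_abs_sub (q:ℝ) (p:ℝ)
          have h2 : |(q:ℝ) - (p:ℝ)| = s := by rw [hsdef, abs_sub_comm]
          linarith
        by_cases hq : (K:ℤ) ≤ |q|
        · have hih := ih q hq
          have t1 : Real.exp (-β * s) * (M * Real.exp (-β * |(q:ℝ)|))
              ≤ M * Real.exp (-β * |(p:ℝ)|) := by
            rw [mul_left_comm, ← Real.exp_add]
            refine mul_le_mul_of_nonneg_left (Real.exp_le_exp.mpr ?_) hM.le
            have h7 := mul_le_mul_of_nonneg_left htri1 hβ.le
            nlinarith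
          have t2 : Real.exp (-β * s) * (A * Real.exp ((ε/2) * |(q:ℝ)|) * Real.exp (-γ * N))
              ≤ A * Real.exp ((ε/2) * |(p:ℝ)|) * Real.exp (-γ * (N+1:ℕ)) := by
            have heq : Real.exp (-β * s) * (A * Real.exp ((ε/2) * |(q:ℝ)|) * Real.exp (-γ * N))
                = A * Real.exp ((-β * s + (ε/2) * |(q:ℝ)|) + -γ * N) := by
              rw [Real.exp_add, Real.exp_add]
              ring
            have heq2 : A * Real.exp ((ε/2) * |(p:ℝ)|) * Real.exp (-γ * (N+1:ℕ))
                = A * Real.exp ((ε/2) * |(p:ℝ)| + -γ * (N+1:ℕ)) := by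
              rw [Real.exp_add]
              ring
            rw [heq, heq2]
            refine mul_le_mul_of_nonneg_left (Real.exp_le_exp.mpr ?_) hA.le
            push_cast
            have hβs : β * s = γ * s + (ε/2) * s := by rw [hβdef, hγdef]; ring
            have e1 : (ε/2) * |(q:ℝ)| ≤ (ε/2) * (|(p:ℝ)| + s) :=
              mul_le_mul_of_nonneg_left htri2 (by positivity)
            have e2 : γ * 1 ≤ γ * s := mul_le_mul_of_nonneg_left hs hγ.le
            nlinarith
          have hφq : Real.exp (-β * s) * |φ q|
              ≤ Real.exp (-β * s) * (M * Real.exp (-β * |(q:ℝ)|)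
                + A * Real.exp ((ε/2) * |(q:ℝ)|) * Real.exp (-γ * N)) :=
            mul_le_mul_of_nonneg_left hih (Real.exp_pos _).le
          rw [mul_add] at hφq
          linarith
        · -- q is in the small region
          push_neg at hq
          have hqK : |(q:ℝ)| ≤ (K:ℝ) := by
            have h0' : |q| ≤ (K:ℤ) := hq.le
            calc |(q:ℝ)| = ((|q| : ℤ) : ℝ) := by rw [Int.cast_abs]
            _ ≤ (K:ℝ) := by exact_mod_cast h0'
          have hφq : |φ q| ≤ A * Real.exp ((ε/2) * (K:ℝ)) := by
            have h1 := hbd q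
            have h2 := hAbd |(q:ℝ)| (abs_nonneg _)
            have h3 : Real.exp ((ε/2) * |(q:ℝ)|) ≤ Real.exp ((ε/2) * (K:ℝ)) :=
              Real.exp_le_exp.mpr (mul_le_mul_of_nonneg_left hqK (by positivity))
            have h4 : A * Real.exp ((ε/2) * |(q:ℝ)|) ≤ A * Real.exp ((ε/2) * (K:ℝ)) :=
              mul_le_mul_of_nonneg_left h3 hA.le
            linarith
          have hsK : Real.exp (-β * s) ≤ Real.exp (β * K) * Real.exp (-β * |(p:ℝ)|) := by
            rw [← Real.exp_add]
            apply Real.exp_le_exp.mpr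
            have h5 : |(p:ℝ)| ≤ (K:ℝ) + s := by linarith
            have h6 := mul_le_mul_of_nonneg_left h5 hβ.le
            nlinarith
          have t1 : Real.exp (-β * s) * |φ q| ≤ M * Real.exp (-β * |(p:ℝ)|) := by
            have e2 : Real.exp (β * (K:ℝ)) * Real.exp ((ε/2) * (K:ℝ))
                = Real.exp ((β + ε/2) * (K:ℝ)) := by
              rw [← Real.exp_add]
              congr 1
              ring
            have e : (Real.exp (β * K) * Real.exp (-β * |(p:ℝ)|)) * (A * Real.exp ((ε/2) * (K:ℝ)))
                = M * Real.exp (-β * |(p:ℝ)|) := by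
              rw [hMdef, ← e2]
              ring
            calc Real.exp (-β * s) * |φ q|
                ≤ (Real.exp (β * K) * Real.exp (-β * |(p:ℝ)|)) * (A * Real.exp ((ε/2) * (K:ℝ))) :=
                  mul_le_mul hsK hφq (abs_nonneg _) (by positivity)
            _ = M * Real.exp (-β * |(p:ℝ)|) := e
          have h3 : (0:ℝ) ≤ A * Real.exp ((ε/2) * |(p:ℝ)|) * Real.exp (-γ * (N+1:ℕ)) := by
            positivity
          linarith
      have hb1 := hbr p₁ hs₁
      have hb2 := hbr p₂ hs₂
      have g1 : 2⁻¹ * (Real.exp (-β * |(p:ℝ)-(p₁:ℝ)|) * |φ p₁|)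
          ≤ 2⁻¹ * (M * Real.exp (-β * |(p:ℝ)|)
            + A * Real.exp ((ε/2) * |(p:ℝ)|) * Real.exp (-γ * (N+1:ℕ))) :=
        mul_le_mul_of_nonneg_left hb1 (by norm_num)
      have g2 : 2⁻¹ * (Real.exp (-β * |(p:ℝ)-(p₂:ℝ)|) * |φ p₂|)
          ≤ 2⁻¹ * (M * Real.exp (-β * |(p:ℝ)|)
            + A * Real.exp ((ε/2) * |(p:ℝ)|) * Real.exp (-γ * (N+1:ℕ))) :=
        mul_le_mul_of_nonneg_left hb2 (by norm_num)
      linarith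
  -- take the limit N → ∞
  have hlim : ∀ p : ℤ, (K:ℤ) ≤ |p| → |φ p| ≤ M * Real.exp (-β * |(p:ℝ)|) := by
    intro p hp
    refine le_of_forall_pos_le_add (fun δ hδ => ?_)
    obtain ⟨B, hBdef⟩ : ∃ B : ℝ, B = A * Real.exp ((ε/2) * |(p:ℝ)|) := ⟨_, rfl⟩
    have hB : 0 < B := by rw [hBdef]; positivity
    obtain ⟨N, hN⟩ : ∃ N : ℕ, B * Real.exp (-γ * N) ≤ δ := by
      refine ⟨⌈Real.log (B/δ) / γ⌉₊, ?_⟩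
      have h1 : Real.log (B/δ) / γ ≤ (⌈Real.log (B/δ) / γ⌉₊ : ℝ) := Nat.le_ceil _
      have h2 : Real.log (B/δ) ≤ γ * (⌈Real.log (B/δ) / γ⌉₊ : ℝ) := by
        rw [div_le_iff₀ hγ] at h1
        linarith
      have h3 : Real.exp (-γ * (⌈Real.log (B/δ) / γ⌉₊ : ℝ)) ≤ Real.exp (-(Real.log (B/δ))) :=
        Real.exp_le_exp.mpr (by linarith)
      rw [Real.exp_neg, Real.exp_log (div_pos hB hδ)] at h3
      calc B * Real.exp (-γ * (⌈Real.log (B/δ) / γ⌉₊ : ℝ)) ≤ B * (B/δ)⁻¹ :=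
            mul_le_mul_of_nonneg_left h3 hB.le
      _ = δ := by field_simp
    have h4 := main N p hp
    rw [← hBdef] at h4
    linarith
  -- conclude
  refine ⟨K + ⌈Real.log M / (ε/2)⌉₊, fun k hk => ?_⟩
  have hpK : (K:ℤ) ≤ |k| := by
    have h5 : (K:ℤ) ≤ ((K + ⌈Real.log M / (ε/2)⌉₊ : ℕ) : ℤ) := by exact_mod_cast Nat.le_add_right _ _
    linarith
  have h1 := hlim k hpK
  have hk' : ((K + ⌈Real.log M / (ε/2)⌉₊ : ℕ) : ℝ) ≤ |(k:ℝ)| := by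
    rw [← Int.cast_abs]
    exact_mod_cast hk
  have hlogM : Real.log M ≤ (ε/2) * |(k:ℝ)| := by
    have h2 : Real.log M / (ε/2) ≤ (⌈Real.log M / (ε/2)⌉₊ : ℝ) := Nat.le_ceil _
    have h3 : ((⌈Real.log M / (ε/2)⌉₊ : ℕ) : ℝ) ≤ |(k:ℝ)| := by
      have h6 : ((⌈Real.log M / (ε/2)⌉₊ : ℕ) : ℝ) ≤ ((K + ⌈Real.log M / (ε/2)⌉₊ : ℕ) : ℝ) := by
        push_cast
        linarith [Nat.cast_nonneg (α := ℝ) K]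
      linarith
    rw [div_le_iff₀ (by positivity)] at h2
    nlinarith
  have hMle : M ≤ Real.exp ((ε/2) * |(k:ℝ)|) := by
    rw [← Real.exp_log hM]
    exact Real.exp_le_exp.mpr hlogM
  calc |φ k| ≤ M * Real.exp (-β * |(k:ℝ)|) := h1
  _ ≤ Real.exp ((ε/2) * |(k:ℝ)|) * Real.exp (-β * |(k:ℝ)|) :=
      mul_le_mul_of_nonneg_right hMle (Real.exp_pos _).le
  _ = Real.exp (-(c - ε) * |(k:ℝ)|) := by
      rw [← Real.exp_add]
      congr 1
      rw [hβdef]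
      ring
end
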